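/- For all complex numbers z, z' with |z| ≤ 1, |z'| ≤ 1, and z ≠ 0, defining F(w) = w ln|w|² (with F(0)=0), we have |F(z) − F(z')| ≤ |z − z'|·(6 − ln|z|²). -/

import Mathlib

/-- The nonlinearity `F(w) = w ln|w|²`, extended by `0` at `w = 0`. -/
noncomputable def logNL (w : ℂ) : ℂ :=
  if w = 0 then 0 else w * Real.log (‖w‖ ^ 2)

lemma logNL_aux (a b : ℝ) (ha : 0 < a) (hab : a ≤ b) :
    a * (Real.log (b ^ 2) - Real.log (a ^ 2)) ≤ 2 * (b - a) := by
  have hb : 0 < b := lt_of_lt_of_le ha hab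
  have h1 : Real.log (b / a) ≤ b / a - 1 := Real.log_le_sub_one_of_pos (div_pos hb ha)
  have h2 : Real.log (b / a) = Real.log b - Real.log a := Real.log_div hb.ne' ha.ne'
  have h3 : Real.log (b ^ 2) = 2 * Real.log b := by
    rw [Real.log_pow]; push_cast; ring
  have h4 : Real.log (a ^ 2) = 2 * Real.log a := by
    rw [Real.log_pow]; push_cast; ring
  have h5 : a * (b / a - 1) = b - a := by field_simp
  nlinarith [mul_le_mul_of_nonneg_left h1 ha.le]

/-- For `|z| ≤ 1`, `|z'| ≤ 1`, `z ≠ 0`, one has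
`|F(z) − F(z')| ≤ |z − z'| (6 − ln|z|²)`. -/
theorem logNL_asymmetric_estimate (z z' : ℂ) (hz : ‖z‖ ≤ 1)
    (hz' : ‖z'‖ ≤ 1) (hz0 : z ≠ 0) :
    ‖logNL z - logNL z'‖ ≤
      ‖z - z'‖ * (6 - Real.log (‖z‖ ^ 2)) := by
  set r : ℝ := ‖z‖ with hr
  set r' : ℝ := ‖z'‖ with hr'
  have hr0 : 0 < r := norm_pos_iff.mpr hz0
  have hL : Real.log (r ^ 2) ≤ 0 := by
    apply Real.log_nonpos (by positivity) (by nlinarith)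
  by_cases hz'0 : z' = 0
  · subst hz'0
    have h0 : logNL 0 = 0 := by simp [logNL]
    rw [h0, sub_zero]
    simp only [logNL, if_neg hz0]
    rw [norm_mul, Complex.norm_real, Real.norm_eq_abs, ← hr]
    have : |Real.log (r ^ 2)| = -Real.log (r ^ 2) := abs_of_nonpos hL
    rw [this]
    have h1 : ‖z - 0‖ = r := by rw [sub_zero]
    rw [h1]
    nlinarith [hr0.le]
  · have hr'0 : 0 < r' := by
      simp only [hr']; exact norm_pos_iff.mpr hz'0
    have habs : |r - r'| ≤ ‖z - z'‖ := by
      exact abs_norm_sub_norm_le z z'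
    have hzz : (0:ℝ) ≤ ‖z - z'‖ := norm_nonneg _
    simp only [logNL, if_neg hz0, if_neg hz'0]
    set L : ℝ := Real.log (r ^ 2) with hLdef
    set L' : ℝ := Real.log (r' ^ 2) with hL'def
    have hL' : L' ≤ 0 := Real.log_nonpos (by positivity) (by nlinarith)
    rcases le_total r' r with hcase | hcase
    · -- |z'| ≤ |z|
      have key : z * (L:ℂ) - z' * (L':ℂ) = (z - z') * (L:ℂ) + z' * ((L:ℂ) - (L':ℂ)) := by
        ring
      rw [key]
      have hLL' : L' ≤ L := by
        apply Real.log_le_log (by positivity) (by nlinarith)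
      have hA : ‖(z - z') * (L:ℂ)‖ = ‖z - z'‖ * (-L) := by
        rw [norm_mul, Complex.norm_real, Real.norm_eq_abs, abs_of_nonpos hL]
      have hB : ‖z' * ((L:ℂ) - (L':ℂ))‖ = r' * (L - L') := by
        rw [norm_mul]
        have : ((L:ℂ) - (L':ℂ)) = ((L - L' : ℝ) : ℂ) := by push_cast; ring
        rw [this, Complex.norm_real, Real.norm_eq_abs, abs_of_nonneg (by linarith)]
      have haux : r' * (L - L') ≤ 2 * (r - r') := logNL_aux r' r hr'0 hcase
      have htri := norm_add_le ((z - z') * (L:ℂ)) (z' * ((L:ℂ) - (L':ℂ)))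
      rw [hA, hB] at htri
      have h6 : r - r' ≤ ‖z - z'‖ := by
        have := abs_le.mp habs; linarith [this.2, le_abs_self (r - r')]
      calc ‖(z - z') * (L:ℂ) + z' * ((L:ℂ) - (L':ℂ))‖
          ≤ ‖z - z'‖ * (-L) + r' * (L - L') := htri
        _ ≤ ‖z - z'‖ * (-L) + 2 * ‖z - z'‖ := by nlinarith
        _ ≤ ‖z - z'‖ * (6 - L) := by nlinarith
    · -- |z| ≤ |z'|
      have key : z * (L:ℂ) - z' * (L':ℂ) = (z - z') * (L':ℂ) + z * ((L:ℂ) - (L':ℂ)) := by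
        ring
      rw [key]
      have hLL' : L ≤ L' := by
        apply Real.log_le_log (by positivity) (by nlinarith)
      have hA : ‖(z - z') * (L':ℂ)‖ = ‖z - z'‖ * (-L') := by
        rw [norm_mul, Complex.norm_real, Real.norm_eq_abs, abs_of_nonpos hL']
      have hB : ‖z * ((L:ℂ) - (L':ℂ))‖ = r * (L' - L) := by
        rw [norm_mul]
        have : ((L:ℂ) - (L':ℂ)) = ((L - L' : ℝ) : ℂ) := by push_cast; ring
        rw [this, Complex.norm_real, Real.norm_eq_abs, abs_of_nonpos (by linarith)]
        ring
      have haux : r * (L' - L) ≤ 2 * (r' - r) := logNL_aux r r' hr0 hcase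
      have htri := norm_add_le ((z - z') * (L':ℂ)) (z * ((L:ℂ) - (L':ℂ)))
      rw [hA, hB] at htri
      have h6 : r' - r ≤ ‖z - z'‖ := by
        have := abs_le.mp habs; linarith [this.1]
      calc ‖(z - z') * (L':ℂ) + z * ((L:ℂ) - (L':ℂ))‖
          ≤ ‖z - z'‖ * (-L') + r * (L' - L) := htri
        _ ≤ ‖z - z'‖ * (-L) + 2 * ‖z - z'‖ := by nlinarith
        _ ≤ ‖z - z'‖ * (6 - L) := by nlinarith
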